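/- The map H_III^A(α,β): (x,y) ↦ ((y/α)Q, (x/β)Q) with Q = (αx+βy)/(x+y) satisfies the Yang–Baxter relation on all triples where the relevant denominators are nonzero and α,β ≠ 0. -/

import Mathlib

set_option maxHeartbeats 1600000

open Function

variable {K : Type*} [Field K]

/-- lift a map on pairs to act on coordinates 1,2 of a triple -/
def lift12 {X : Type*} (f : X × X → X × X) : X × X × X → X × X × X :=
  fun p => ((f (p.1, p.2.1)).1, (f (p.1, p.2.1)).2, p.2.2)

/-- lift to coordinates 1,3 -/
def lift13 {X : Type*} (f : X × X → X × X) : X × X × X → X × X × X :=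
  fun p => ((f (p.1, p.2.2)).1, p.2.1, (f (p.1, p.2.2)).2)

/-- lift to coordinates 2,3 -/
def lift23 {X : Type*} (f : X × X → X × X) : X × X × X → X × X × X :=
  fun p => (p.1, (f (p.2.1, p.2.2)).1, (f (p.2.1, p.2.2)).2)

def HIIIAMap (a b : K) : K × K → K × K :=
  fun p => ((p.2 / a) * ((a*p.1 + b*p.2)/(p.1 + p.2)), (p.1 / b) * ((a*p.1 + b*p.2)/(p.1 + p.2)))

private lemma Hstep (a b u v t : K) (ha : a ≠ 0) (hb : b ≠ 0) (ht : t ≠ 0) (huv : u + v ≠ 0) :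
    HIIIAMap a b (u/t, v/t) = (v*(a*u+b*v)/(a*(u+v)*t), u*(a*u+b*v)/(b*(u+v)*t)) := by
  have h1 : u/t + v/t = (u+v)/t := (add_div u v t).symm
  simp only [HIIIAMap]
  refine Prod.ext ?_ ?_ <;>
    · dsimp only
      rw [h1, div_div_eq_mul_div]
      field_simp

theorem yangBaxter_HIIIA (a1 a2 a3 x y z : K)
    (hp1 : a1 ≠ 0) (hp2 : a2 ≠ 0) (hp3 : a3 ≠ 0)
    (h1 : (x + y) ≠ 0)
    (h2 : ((lift12 (HIIIAMap a1 a2) (x, y, z)).1 + (lift12 (HIIIAMap a1 a2) (x, y, z)).2.2) ≠ 0)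
    (h3 : ((lift13 (HIIIAMap a1 a3) (lift12 (HIIIAMap a1 a2) (x, y, z))).2.1 + (lift13 (HIIIAMap a1 a3) (lift12 (HIIIAMap a1 a2) (x, y, z))).2.2) ≠ 0)
    (h4 : (y + z) ≠ 0)
    (h5 : ((lift23 (HIIIAMap a2 a3) (x, y, z)).1 + (lift23 (HIIIAMap a2 a3) (x, y, z)).2.2) ≠ 0)
    (h6 : ((lift13 (HIIIAMap a1 a3) (lift23 (HIIIAMap a2 a3) (x, y, z))).1 + (lift13 (HIIIAMap a1 a3) (lift23 (HIIIAMap a2 a3) (x, y, z))).2.1) ≠ 0) :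
    lift23 (HIIIAMap a2 a3) (lift13 (HIIIAMap a1 a3) (lift12 (HIIIAMap a1 a2) (x, y, z))) =
      lift12 (HIIIAMap a1 a2) (lift13 (HIIIAMap a1 a3) (lift23 (HIIIAMap a2 a3) (x, y, z))) := by
  -- ===== LHS chain =====
  have eL1 : lift12 (HIIIAMap a1 a2) (x, y, z) =
      (y*(a1*x+a2*y)/(a1*(x+y)), x*(a1*x+a2*y)/(a2*(x+y)), z) := by
    simp only [lift12, HIIIAMap]
    refine Prod.ext ?_ (Prod.ext ?_ rfl) <;> (try dsimp only; try field_simp; try ring)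
  rw [eL1] at h2 h3
  have hD2 : (y*(a1*x+a2*y)) + (a1*z*(x+y)) ≠ 0 := by
    dsimp only at h2
    field_simp at h2
    intro hc; exact h2 (by rw [div_eq_zero_iff]; left; linear_combination hc)
  have epair1 : ((y*(a1*x+a2*y)/(a1*(x+y)) : K), (z : K)) = ((y*(a1*x+a2*y))/(a1*(x+y)), (a1*z*(x+y))/(a1*(x+y))) := by
    refine Prod.ext ?_ ?_ <;> (try dsimp only; try field_simp; try ring)
  have eL2 : lift13 (HIIIAMap a1 a3) (y*(a1*x+a2*y)/(a1*(x+y)), x*(a1*x+a2*y)/(a2*(x+y)), z) =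
      ((a1*z*(x+y))*(a1*(y*(a1*x+a2*y))+a3*(a1*z*(x+y)))/(a1*((y*(a1*x+a2*y))+(a1*z*(x+y)))*(a1*(x+y))), x*(a1*x+a2*y)/(a2*(x+y)),
       (y*(a1*x+a2*y))*(a1*(y*(a1*x+a2*y))+a3*(a1*z*(x+y)))/(a3*((y*(a1*x+a2*y))+(a1*z*(x+y)))*(a1*(x+y)))) := by
    simp only [lift13]
    try dsimp only
    rw [show ((y*(a1*x+a2*y)/(a1*(x+y)) : K), (z : K)) = ((y*(a1*x+a2*y))/(a1*(x+y)), (a1*z*(x+y))/(a1*(x+y))) from epair1,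
      Hstep a1 a3 _ _ _ hp1 hp3 (mul_ne_zero hp1 h1) hD2]
  rw [eL2] at h3
  dsimp only at h3
  field_simp at h3
  have hsum2 : (a1*a3*x*(a1*x+a2*y)*((y*(a1*x+a2*y))+(a1*z*(x+y)))) + (a2*y*(a1*x+a2*y)*(a1*(y*(a1*x+a2*y))+a3*(a1*z*(x+y)))) ≠ 0 :=
    fun hc => h3 (by
      have hD' : y*(x*a1+a2*y) + a1*(x+y)*z ≠ 0 := fun h => hD2 (by linear_combination h)
      field_simp
      rw [mul_zero]
      refine (mul_eq_zero.mp ?_).resolve_left hp1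
      linear_combination hc)
  have ht2 : (a1*a2*a3*(x+y)*((y*(a1*x+a2*y))+(a1*z*(x+y)))) ≠ 0 := by
    exact mul_ne_zero (mul_ne_zero (mul_ne_zero (mul_ne_zero hp1 hp2) hp3) h1) hD2
  have epair2 : ((x*(a1*x+a2*y)/(a2*(x+y)) : K),
      ((y*(a1*x+a2*y))*(a1*(y*(a1*x+a2*y))+a3*(a1*z*(x+y)))/(a3*((y*(a1*x+a2*y))+(a1*z*(x+y)))*(a1*(x+y))) : K)) = ((a1*a3*x*(a1*x+a2*y)*((y*(a1*x+a2*y))+(a1*z*(x+y))))/(a1*a2*a3*(x+y)*((y*(a1*x+a2*y))+(a1*z*(x+y)))), (a2*y*(a1*x+a2*y)*(a1*(y*(a1*x+a2*y))+a3*(a1*z*(x+y))))/(a1*a2*a3*(x+y)*((y*(a1*x+a2*y))+(a1*z*(x+y))))) := by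
    refine Prod.ext ?_ ?_ <;>
      (dsimp only; rw [div_eq_div_iff (by first
          | exact mul_ne_zero hp2 h1
          | exact mul_ne_zero (mul_ne_zero hp3 hD2) (mul_ne_zero hp1 h1)) ht2]; ring)
  have eL3 : lift23 (HIIIAMap a2 a3)
      ((a1*z*(x+y))*(a1*(y*(a1*x+a2*y))+a3*(a1*z*(x+y)))/(a1*((y*(a1*x+a2*y))+(a1*z*(x+y)))*(a1*(x+y))), x*(a1*x+a2*y)/(a2*(x+y)),
       (y*(a1*x+a2*y))*(a1*(y*(a1*x+a2*y))+a3*(a1*z*(x+y)))/(a3*((y*(a1*x+a2*y))+(a1*z*(x+y)))*(a1*(x+y)))) =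
      ((a1*z*(x+y))*(a1*(y*(a1*x+a2*y))+a3*(a1*z*(x+y)))/(a1*((y*(a1*x+a2*y))+(a1*z*(x+y)))*(a1*(x+y))),
       (a2*y*(a1*x+a2*y)*(a1*(y*(a1*x+a2*y))+a3*(a1*z*(x+y))))*(a2*(a1*a3*x*(a1*x+a2*y)*((y*(a1*x+a2*y))+(a1*z*(x+y))))+a3*(a2*y*(a1*x+a2*y)*(a1*(y*(a1*x+a2*y))+a3*(a1*z*(x+y)))))/(a2*((a1*a3*x*(a1*x+a2*y)*((y*(a1*x+a2*y))+(a1*z*(x+y))))+(a2*y*(a1*x+a2*y)*(a1*(y*(a1*x+a2*y))+a3*(a1*z*(x+y)))))*(a1*a2*a3*(x+y)*((y*(a1*x+a2*y))+(a1*z*(x+y))))),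
       (a1*a3*x*(a1*x+a2*y)*((y*(a1*x+a2*y))+(a1*z*(x+y))))*(a2*(a1*a3*x*(a1*x+a2*y)*((y*(a1*x+a2*y))+(a1*z*(x+y))))+a3*(a2*y*(a1*x+a2*y)*(a1*(y*(a1*x+a2*y))+a3*(a1*z*(x+y)))))/(a3*((a1*a3*x*(a1*x+a2*y)*((y*(a1*x+a2*y))+(a1*z*(x+y))))+(a2*y*(a1*x+a2*y)*(a1*(y*(a1*x+a2*y))+a3*(a1*z*(x+y)))))*(a1*a2*a3*(x+y)*((y*(a1*x+a2*y))+(a1*z*(x+y)))))) := by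
    simp only [lift23]
    try dsimp only
    rw [show ((x*(a1*x+a2*y)/(a2*(x+y)) : K),
        ((y*(a1*x+a2*y))*(a1*(y*(a1*x+a2*y))+a3*(a1*z*(x+y)))/(a3*((y*(a1*x+a2*y))+(a1*z*(x+y)))*(a1*(x+y))) : K)) = ((a1*a3*x*(a1*x+a2*y)*((y*(a1*x+a2*y))+(a1*z*(x+y))))/(a1*a2*a3*(x+y)*((y*(a1*x+a2*y))+(a1*z*(x+y)))), (a2*y*(a1*x+a2*y)*(a1*(y*(a1*x+a2*y))+a3*(a1*z*(x+y))))/(a1*a2*a3*(x+y)*((y*(a1*x+a2*y))+(a1*z*(x+y))))) from epair2,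
      Hstep a2 a3 _ _ _ hp2 hp3 ht2 hsum2]
  -- ===== RHS chain =====
  have eR1 : lift23 (HIIIAMap a2 a3) (x, y, z) =
      (x, z*(a2*y+a3*z)/(a2*(y+z)), y*(a2*y+a3*z)/(a3*(y+z))) := by
    simp only [lift23, HIIIAMap]
    refine Prod.ext rfl (Prod.ext ?_ ?_) <;> (try dsimp only; try field_simp; try ring)
  rw [eR1] at h5 h6
  have hD2p : (a3*x*(y+z)) + (y*(a2*y+a3*z)) ≠ 0 := by
    dsimp only at h5
    field_simp at h5
    intro hc; exact h5 (by rw [div_eq_zero_iff]; left; linear_combination hc)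
  have epair1p : ((x : K), (y*(a2*y+a3*z)/(a3*(y+z)) : K)) = ((a3*x*(y+z))/(a3*(y+z)), (y*(a2*y+a3*z))/(a3*(y+z))) := by
    refine Prod.ext ?_ ?_ <;> (try dsimp only; try field_simp; try ring)
  have eR2 : lift13 (HIIIAMap a1 a3) (x, z*(a2*y+a3*z)/(a2*(y+z)), y*(a2*y+a3*z)/(a3*(y+z))) =
      ((y*(a2*y+a3*z))*(a1*(a3*x*(y+z))+a3*(y*(a2*y+a3*z)))/(a1*((a3*x*(y+z))+(y*(a2*y+a3*z)))*(a3*(y+z))), z*(a2*y+a3*z)/(a2*(y+z)),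
       (a3*x*(y+z))*(a1*(a3*x*(y+z))+a3*(y*(a2*y+a3*z)))/(a3*((a3*x*(y+z))+(y*(a2*y+a3*z)))*(a3*(y+z)))) := by
    simp only [lift13]
    try dsimp only
    rw [show ((x : K), (y*(a2*y+a3*z)/(a3*(y+z)) : K)) = ((a3*x*(y+z))/(a3*(y+z)), (y*(a2*y+a3*z))/(a3*(y+z))) from epair1p,
      Hstep a1 a3 _ _ _ hp1 hp3 (mul_ne_zero hp3 h4) hD2p]
  rw [eR2] at h6
  dsimp only at h6
  field_simp at h6
  have hsum2p : (a2*(y*(a2*y+a3*z))*(a1*(a3*x*(y+z))+a3*(y*(a2*y+a3*z)))) + (a1*a3*z*(a2*y+a3*z)*((a3*x*(y+z))+(y*(a2*y+a3*z)))) ≠ 0 :=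
    fun hc => h6 (by
      have hD' : a3*x*(y+z) + y*(y*a2+a3*z) ≠ 0 := fun h => hD2p (by linear_combination h)
      field_simp
      rw [mul_zero]
      refine (mul_eq_zero.mp ?_).resolve_left hp3
      linear_combination hc)
  have ht2p : (a1*a2*a3*(y+z)*((a3*x*(y+z))+(y*(a2*y+a3*z)))) ≠ 0 := by
    exact mul_ne_zero (mul_ne_zero (mul_ne_zero (mul_ne_zero hp1 hp2) hp3) h4) hD2p
  have epair2p : (((y*(a2*y+a3*z))*(a1*(a3*x*(y+z))+a3*(y*(a2*y+a3*z)))/(a1*((a3*x*(y+z))+(y*(a2*y+a3*z)))*(a3*(y+z))) : K),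
      (z*(a2*y+a3*z)/(a2*(y+z)) : K)) = ((a2*(y*(a2*y+a3*z))*(a1*(a3*x*(y+z))+a3*(y*(a2*y+a3*z))))/(a1*a2*a3*(y+z)*((a3*x*(y+z))+(y*(a2*y+a3*z)))), (a1*a3*z*(a2*y+a3*z)*((a3*x*(y+z))+(y*(a2*y+a3*z))))/(a1*a2*a3*(y+z)*((a3*x*(y+z))+(y*(a2*y+a3*z))))) := by
    refine Prod.ext ?_ ?_ <;>
      (try dsimp only; rw [div_eq_div_iff (by first
          | exact mul_ne_zero hp2 h4
          | exact mul_ne_zero (mul_ne_zero hp1 hD2p) (mul_ne_zero hp3 h4)) ht2p]; ring)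
  have eR3 : lift12 (HIIIAMap a1 a2)
      ((y*(a2*y+a3*z))*(a1*(a3*x*(y+z))+a3*(y*(a2*y+a3*z)))/(a1*((a3*x*(y+z))+(y*(a2*y+a3*z)))*(a3*(y+z))), z*(a2*y+a3*z)/(a2*(y+z)),
       (a3*x*(y+z))*(a1*(a3*x*(y+z))+a3*(y*(a2*y+a3*z)))/(a3*((a3*x*(y+z))+(y*(a2*y+a3*z)))*(a3*(y+z)))) =
      ((a1*a3*z*(a2*y+a3*z)*((a3*x*(y+z))+(y*(a2*y+a3*z))))*(a1*(a2*(y*(a2*y+a3*z))*(a1*(a3*x*(y+z))+a3*(y*(a2*y+a3*z))))+a2*(a1*a3*z*(a2*y+a3*z)*((a3*x*(y+z))+(y*(a2*y+a3*z)))))/(a1*((a2*(y*(a2*y+a3*z))*(a1*(a3*x*(y+z))+a3*(y*(a2*y+a3*z))))+(a1*a3*z*(a2*y+a3*z)*((a3*x*(y+z))+(y*(a2*y+a3*z)))))*(a1*a2*a3*(y+z)*((a3*x*(y+z))+(y*(a2*y+a3*z))))),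
       (a2*(y*(a2*y+a3*z))*(a1*(a3*x*(y+z))+a3*(y*(a2*y+a3*z))))*(a1*(a2*(y*(a2*y+a3*z))*(a1*(a3*x*(y+z))+a3*(y*(a2*y+a3*z))))+a2*(a1*a3*z*(a2*y+a3*z)*((a3*x*(y+z))+(y*(a2*y+a3*z)))))/(a2*((a2*(y*(a2*y+a3*z))*(a1*(a3*x*(y+z))+a3*(y*(a2*y+a3*z))))+(a1*a3*z*(a2*y+a3*z)*((a3*x*(y+z))+(y*(a2*y+a3*z)))))*(a1*a2*a3*(y+z)*((a3*x*(y+z))+(y*(a2*y+a3*z))))),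
       (a3*x*(y+z))*(a1*(a3*x*(y+z))+a3*(y*(a2*y+a3*z)))/(a3*((a3*x*(y+z))+(y*(a2*y+a3*z)))*(a3*(y+z)))) := by
    simp only [lift12]
    try dsimp only
    rw [show (((y*(a2*y+a3*z))*(a1*(a3*x*(y+z))+a3*(y*(a2*y+a3*z)))/(a1*((a3*x*(y+z))+(y*(a2*y+a3*z)))*(a3*(y+z))) : K),
        (z*(a2*y+a3*z)/(a2*(y+z)) : K)) = ((a2*(y*(a2*y+a3*z))*(a1*(a3*x*(y+z))+a3*(y*(a2*y+a3*z))))/(a1*a2*a3*(y+z)*((a3*x*(y+z))+(y*(a2*y+a3*z)))), (a1*a3*z*(a2*y+a3*z)*((a3*x*(y+z))+(y*(a2*y+a3*z))))/(a1*a2*a3*(y+z)*((a3*x*(y+z))+(y*(a2*y+a3*z))))) from epair2p,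
      Hstep a1 a2 _ _ _ hp1 hp2 ht2p hsum2p]
  -- ===== final comparison =====
  rw [eL1, eL2, eL3, eR1, eR2, eR3]
  have hd1 : a1*((y*(a1*x+a2*y))+(a1*z*(x+y)))*(a1*(x+y)) ≠ 0 :=
    mul_ne_zero (mul_ne_zero hp1 hD2) (mul_ne_zero hp1 h1)
  have hd2 : a2*((a1*a3*x*(a1*x+a2*y)*((y*(a1*x+a2*y))+(a1*z*(x+y))))+(a2*y*(a1*x+a2*y)*(a1*(y*(a1*x+a2*y))+a3*(a1*z*(x+y)))))*(a1*a2*a3*(x+y)*((y*(a1*x+a2*y))+(a1*z*(x+y)))) ≠ 0 := mul_ne_zero (mul_ne_zero hp2 hsum2) ht2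
  have hd3 : a3*((a1*a3*x*(a1*x+a2*y)*((y*(a1*x+a2*y))+(a1*z*(x+y))))+(a2*y*(a1*x+a2*y)*(a1*(y*(a1*x+a2*y))+a3*(a1*z*(x+y)))))*(a1*a2*a3*(x+y)*((y*(a1*x+a2*y))+(a1*z*(x+y)))) ≠ 0 := mul_ne_zero (mul_ne_zero hp3 hsum2) ht2
  have hd1p : a1*((a2*(y*(a2*y+a3*z))*(a1*(a3*x*(y+z))+a3*(y*(a2*y+a3*z))))+(a1*a3*z*(a2*y+a3*z)*((a3*x*(y+z))+(y*(a2*y+a3*z)))))*(a1*a2*a3*(y+z)*((a3*x*(y+z))+(y*(a2*y+a3*z)))) ≠ 0 := mul_ne_zero (mul_ne_zero hp1 hsum2p) ht2p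
  have hd2p : a2*((a2*(y*(a2*y+a3*z))*(a1*(a3*x*(y+z))+a3*(y*(a2*y+a3*z))))+(a1*a3*z*(a2*y+a3*z)*((a3*x*(y+z))+(y*(a2*y+a3*z)))))*(a1*a2*a3*(y+z)*((a3*x*(y+z))+(y*(a2*y+a3*z)))) ≠ 0 := mul_ne_zero (mul_ne_zero hp2 hsum2p) ht2p
  have hd3p : a3*((a3*x*(y+z))+(y*(a2*y+a3*z)))*(a3*(y+z)) ≠ 0 :=
    mul_ne_zero (mul_ne_zero hp3 hD2p) (mul_ne_zero hp3 h4)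
  refine Prod.ext ?_ (Prod.ext ?_ ?_) <;>
    (try dsimp only;
     rw [div_eq_div_iff (by assumption) (by assumption)]; ring)
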